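/- Let r be an odd prime, ζ a primitive r-th root of unity, α nonzero with β = 1/α, δ nonzero, γ_j = δ(ζ^j α + ζ^(−j) β). For each fixed k with 0 ≤ k ≤ r−1, one has ∏_{0 ≤ j ≤ r−1, j ≠ k} (γ_k − γ_j) = r·δ^(r−1)·(α^r − β^r) / (ζ^k·(α − ζ^(−2k)·β)). -/

import Mathlib

open Finset Polynomial

/-- The image of `range r` under `ζ ^ ·` is the set of `r`-th roots of unity. -/
lemma aux_image_pow {F : Type*} [Field F] [DecidableEq F] {r : ℕ} {ζ : F} (hr : 0 < r)
    (hζ : IsPrimitiveRoot ζ r) :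
    (Finset.range r).image (ζ ^ ·) = nthRootsFinset r (1 : F) := by
  have hinj : Set.InjOn (ζ ^ ·) (Finset.range r) := fun i hi j hj hij =>
    hζ.pow_inj (Finset.mem_range.1 hi) (Finset.mem_range.1 hj) hij
  apply Finset.eq_of_subset_of_card_le
  · intro y hy
    simp only [Finset.mem_image, Finset.mem_range] at hy
    obtain ⟨j, hj, rfl⟩ := hy
    exact (mem_nthRootsFinset hr (1 : F)).2
      (by rw [← pow_mul, mul_comm, pow_mul, hζ.pow_eq_one, one_pow])
  · rw [hζ.card_nthRootsFinset, Finset.card_image_of_injOn hinj, Finset.card_range]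

/-- `∏_{j<r} (X - ζ^j) = X^r - 1` as polynomials. -/
lemma aux_nodal {F : Type*} [Field F] {r : ℕ} {ζ : F} (hr : 0 < r)
    (hζ : IsPrimitiveRoot ζ r) :
    ∏ j ∈ Finset.range r, (X - C (ζ ^ j)) = X ^ r - 1 := by
  classical
  rw [X_pow_sub_one_eq_prod hr hζ, ← aux_image_pow hr hζ, Finset.prod_image]
  intro i hi j hj hij
  exact hζ.pow_inj (Finset.mem_range.1 hi) (Finset.mem_range.1 hj) hij

/-- Scalar version: `∏_{j<r} (x - ζ^j) = x^r - 1`. -/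
lemma aux_prod_pow {F : Type*} [Field F] {r : ℕ} {ζ : F} (hr : 0 < r)
    (hζ : IsPrimitiveRoot ζ r) (x : F) :
    ∏ j ∈ Finset.range r, (x - ζ ^ j) = x ^ r - 1 := by
  have := congrArg (Polynomial.eval x) (aux_nodal hr hζ)
  simpa only [eval_prod, eval_sub, eval_X, eval_C, eval_pow, eval_one] using this

/-- Scaled version: `∏_{j<r} (x - c·ζ^j) = x^r - c^r` for `c ≠ 0`. -/
lemma aux_prod_pow' {F : Type*} [Field F] {r : ℕ} {ζ : F} (hr : 0 < r)
    (hζ : IsPrimitiveRoot ζ r) (x c : F) (hc : c ≠ 0) :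
    ∏ j ∈ Finset.range r, (x - c * ζ ^ j) = x ^ r - c ^ r := by
  have h := aux_prod_pow hr hζ (x / c)
  have h2 : ∏ j ∈ Finset.range r, (x - c * ζ ^ j)
      = ∏ j ∈ Finset.range r, (c * (x / c - ζ ^ j)) := by
    refine Finset.prod_congr rfl fun j _ => ?_
    field_simp
  rw [h2, Finset.prod_mul_distrib, Finset.prod_const, Finset.card_range, h]
  rw [div_pow, mul_sub, mul_one]; congr 1
  field_simp

/-- `∏_{j<r, j≠k} (ζ^k - ζ^j) = r · ζ^{k(r-1)}`. -/
lemma aux_prod_erase {F : Type*} [Field F] {r : ℕ} {ζ : F} (hr : 0 < r)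
    (hζ : IsPrimitiveRoot ζ r) {k : ℕ} (hk : k < r) :
    ∏ j ∈ (Finset.range r).erase k, (ζ ^ k - ζ ^ j) = (r : F) * ζ ^ (k * (r - 1)) := by
  classical
  have hmem : k ∈ Finset.range r := Finset.mem_range.2 hk
  have h1 := Lagrange.eval_nodal_derivative_eval_node_eq (v := fun j : ℕ => ζ ^ j) hmem
  have h2 : Lagrange.nodal (Finset.range r) (fun j : ℕ => ζ ^ j) = X ^ r - 1 := by
    rw [Lagrange.nodal]; exact aux_nodal hr hζ
  have h3 : eval (ζ ^ k) (derivative ((X : F[X]) ^ r - 1)) = (r : F) * ζ ^ (k * (r - 1)) := by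
    rw [derivative_sub, derivative_one, sub_zero, derivative_X_pow]
    simp [← pow_mul, mul_comm]
  rw [h2, Lagrange.eval_nodal] at h1
  exact h1.symm.trans h3

/-- With `γ_j := δ(ζ^j α + ζ^{−j} β)` pairwise distinct, for each `0 ≤ k ≤ r−1`:
`∏_{j ≠ k} (γ_k − γ_j) = r·δ^{r−1}·(α^r − β^r) / (ζ^k·(α − ζ^{−2k}·β))`. -/
theorem stmt9 {F : Type*} [Field F] [IsAlgClosed F] [CharZero F] (r : ℕ) (hr : r.Prime)
    (hodd : Odd r) (ζ α δ : F) (hζ : IsPrimitiveRoot ζ r) (hα : α ≠ 0) (hδ : δ ≠ 0)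
    (hdist : ∀ m : ℤ, α ≠ ζ ^ m * α⁻¹) (k : ℕ) (hk : k ≤ r - 1) :
    ∏ j ∈ (Finset.range r).erase k,
        (δ * (ζ ^ k * α + ζ⁻¹ ^ k * α⁻¹) - δ * (ζ ^ j * α + ζ⁻¹ ^ j * α⁻¹)) =
      (r : F) * δ ^ (r - 1) * (α ^ r - α⁻¹ ^ r) /
        (ζ ^ k * (α - ζ ^ (-2 * (k : ℤ)) * α⁻¹)) := by
  classical
  have hrpos : 0 < r := hr.pos
  have hkr : k < r := lt_of_le_of_lt hk (Nat.sub_lt hrpos one_pos)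
  have hζ0 : ζ ≠ 0 := hζ.ne_zero hrpos.ne'
  have hmem : k ∈ Finset.range r := Finset.mem_range.2 hkr
  have hcan : ∀ j : ℕ, ζ ^ j * ζ⁻¹ ^ j = 1 := fun j => by
    rw [← mul_pow, mul_inv_cancel₀ hζ0, one_pow]
  have hP1 : ∏ j ∈ (Finset.range r).erase k, (ζ ^ k - ζ ^ j)
      = (r : F) * ζ ^ (k * (r - 1)) := aux_prod_erase hrpos hζ hkr
  set c : F := α⁻¹ * ζ⁻¹ ^ k with hc
  -- factor each term
  have hterm : ∀ j : ℕ,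
      δ * (ζ ^ k * α + ζ⁻¹ ^ k * α⁻¹) - δ * (ζ ^ j * α + ζ⁻¹ ^ j * α⁻¹)
        = δ * (ζ ^ k - ζ ^ j) * (α - c * ζ⁻¹ ^ j) := by
    intro j
    have h1 := hcan k
    have h2 := hcan j
    rw [hc]
    linear_combination (δ * α⁻¹ * ζ⁻¹ ^ j) * h1 - (δ * α⁻¹ * ζ⁻¹ ^ k) * h2
  -- split the product
  have hsplit : ∏ j ∈ (Finset.range r).erase k,
      (δ * (ζ ^ k * α + ζ⁻¹ ^ k * α⁻¹) - δ * (ζ ^ j * α + ζ⁻¹ ^ j * α⁻¹))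
      = δ ^ (r - 1) * (∏ j ∈ (Finset.range r).erase k, (ζ ^ k - ζ ^ j))
          * ∏ j ∈ (Finset.range r).erase k, (α - c * ζ⁻¹ ^ j) := by
    rw [Finset.prod_congr rfl fun j _ => hterm j]
    rw [show (fun j => δ * (ζ ^ k - ζ ^ j) * (α - c * ζ⁻¹ ^ j))
        = fun j => (δ * (ζ ^ k - ζ ^ j)) * (α - c * ζ⁻¹ ^ j) from rfl]
    rw [Finset.prod_mul_distrib, Finset.prod_mul_distrib, Finset.prod_const,
      Finset.card_erase_of_mem hmem, Finset.card_range, mul_assoc]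
  have hcne : c ≠ 0 := mul_ne_zero (inv_ne_zero hα) (pow_ne_zero _ (inv_ne_zero hζ0))
  have hfull : ∏ j ∈ Finset.range r, (α - c * ζ⁻¹ ^ j) = α ^ r - α⁻¹ ^ r := by
    rw [aux_prod_pow' hrpos hζ.inv α c hcne]
    have hcr : c ^ r = α⁻¹ ^ r := by
      rw [hc, mul_pow, ← pow_mul, mul_comm k r, pow_mul, hζ.inv.pow_eq_one, one_pow, mul_one]
    rw [hcr]
  -- the k-th factor
  have hfk : α - c * ζ⁻¹ ^ k = α - ζ ^ (-2 * (k : ℤ)) * α⁻¹ := by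
    have hz : (ζ : F) ^ (-2 * (k : ℤ)) = ζ⁻¹ ^ k * ζ⁻¹ ^ k := by
      rw [← zpow_natCast ζ⁻¹ k, ← zpow_add₀ (inv_ne_zero hζ0), inv_zpow, ← zpow_neg]
      congr 1
      ring
    rw [hz, hc]; ring
  have hfkne : α - c * ζ⁻¹ ^ k ≠ 0 := by
    rw [hfk]
    exact sub_ne_zero.2 (hdist (-2 * (k : ℤ)))
  have hdenne : α - ζ ^ (-2 * (k : ℤ)) * α⁻¹ ≠ 0 := by rw [← hfk]; exact hfkne
  have hP2 : ∏ j ∈ (Finset.range r).erase k, (α - c * ζ⁻¹ ^ j)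
      = (α ^ r - α⁻¹ ^ r) / (α - ζ ^ (-2 * (k : ℤ)) * α⁻¹) := by
    have h := Finset.mul_prod_erase (Finset.range r) (fun j => α - c * ζ⁻¹ ^ j) hmem
    rw [hfull] at h
    rw [eq_div_iff hdenne, ← hfk, mul_comm]
    exact h
  rw [hsplit, hP1, hP2]
  -- final algebra
  have hζk : (ζ : F) ^ k ≠ 0 := pow_ne_zero _ hζ0
  have hpow : ζ ^ (k * (r - 1)) * ζ ^ k = 1 := by
    rw [← pow_add]
    have h5 : k * (r - 1) + k = k * r := by
      calc k * (r - 1) + k = k * ((r - 1) + 1) := by ring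
        _ = k * r := by rw [Nat.sub_add_cancel hrpos]
    rw [h5, mul_comm, pow_mul, hζ.pow_eq_one, one_pow]
  rw [mul_comm (δ ^ (r - 1) * ((r : F) * ζ ^ (k * (r - 1))))]
  rw [div_mul_eq_mul_div, div_eq_div_iff hdenne (mul_ne_zero hζk hdenne)]
  linear_combination ((r : F) * δ ^ (r - 1) * (α ^ r - α⁻¹ ^ r)
    * (α - ζ ^ (-2 * (k : ℤ)) * α⁻¹)) * hpow
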